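/- Let y⋆ > 0, let w, V : (0,y⋆) → ℝ be continuous with w(y) > 0 for all y ∈ (0,y⋆), let λ ∈ ℂ, and let v : (0,y⋆) → ℂ be twice continuously differentiable and not identically zero, satisfying −v''(y) + V(y)v(y) = −((1−λ)²/w(y)²)·v(y) for all y ∈ (0,y⋆). Assume the integrals ∫₀^{y⋆}|v'(y)|² dy, ∫₀^{y⋆}|V(y)||v(y)|² dy and ∫₀^{y⋆}|v(y)|²/w(y) dy are finite, and that v'(y)·conj(v(y)) → 0 as y → 0⁺ and as y → y⋆⁻. Then (1−λ)² is a real number; in particular, if Re λ > 1 then λ is real. -/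

import Mathlib

open MeasureTheory

/-- If `g` has nonnegative derivative `u` on `(a,b)` and `g → 0` at both endpoints,
then `u ≡ 0` on `(a,b)`. -/
lemma aux_vanish {a b : ℝ} (hab : a < b) (g u : ℝ → ℝ)
    (hu : ∀ y ∈ Set.Ioo a b, 0 ≤ u y)
    (hg : ∀ y ∈ Set.Ioo a b, HasDerivAt g (u y) y)
    (h0 : Filter.Tendsto g (nhdsWithin a (Set.Ioo a b)) (nhds 0))
    (h1 : Filter.Tendsto g (nhdsWithin b (Set.Ioo a b)) (nhds 0)) :
    ∀ y ∈ Set.Ioo a b, u y = 0 := by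
  have hcont : ContinuousOn g (Set.Ioo a b) := fun y hy =>
    ((hg y hy).continuousAt).continuousWithinAt
  have hdiff : DifferentiableOn ℝ g (interior (Set.Ioo a b)) := by
    rw [interior_Ioo]
    exact fun y hy => ((hg y hy).differentiableAt).differentiableWithinAt
  have hmono : MonotoneOn g (Set.Ioo a b) := by
    refine monotoneOn_of_deriv_nonneg (convex_Ioo a b) hcont hdiff ?_
    intro y hy
    rw [interior_Ioo] at hy
    rw [(hg y hy).deriv]
    exact hu y hy
  haveI h0nb : (nhdsWithin a (Set.Ioo a b)).NeBot := left_nhdsWithin_Ioo_neBot hab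
  haveI h1nb : (nhdsWithin b (Set.Ioo a b)).NeBot := right_nhdsWithin_Ioo_neBot hab
  have gzero : ∀ y ∈ Set.Ioo a b, g y = 0 := by
    intro y hy
    refine le_antisymm ?_ ?_
    · refine ge_of_tendsto h1 ?_
      have hmem : Set.Ioi y ∈ nhdsWithin b (Set.Ioo a b) :=
        nhdsWithin_le_nhds (Ioi_mem_nhds hy.2)
      filter_upwards [hmem, self_mem_nhdsWithin] with z hz1 hz2
      exact hmono hy hz2 (le_of_lt hz1)
    · refine le_of_tendsto h0 ?_
      have hmem : Set.Iio y ∈ nhdsWithin a (Set.Ioo a b) :=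
        nhdsWithin_le_nhds (Iio_mem_nhds hy.1)
      filter_upwards [hmem, self_mem_nhdsWithin] with z hz1 hz2
      exact hmono hz2 hy (le_of_lt hz1)
  intro y hy
  have heq : g =ᶠ[nhds y] (fun _ => (0:ℝ)) := by
    filter_upwards [isOpen_Ioo.mem_nhds hy] with z hz
    exact gzero z hz
  have h0' : HasDerivAt g 0 y :=
    (hasDerivAt_const y (0:ℝ)).congr_of_eventuallyEq heq
  exact (hg y hy).unique h0'

/-- Energy identity for the supersymmetric normal form: `(1-λ)²` is real;
in particular if `Re λ > 1` then `λ` is real. -/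
theorem supersymmetric_eigenvalue_real
    (ystar : ℝ) (hystar : 0 < ystar)
    (w V : ℝ → ℝ)
    (hw_cont : ContinuousOn w (Set.Ioo 0 ystar))
    (hV_cont : ContinuousOn V (Set.Ioo 0 ystar))
    (hw_pos : ∀ y ∈ Set.Ioo (0:ℝ) ystar, 0 < w y)
    (lam : ℂ) (v : ℝ → ℂ)
    (hv_C2 : ContDiffOn ℝ 2 v (Set.Ioo 0 ystar))
    (hv_ne : ∃ y ∈ Set.Ioo (0:ℝ) ystar, v y ≠ 0)
    (hODE : ∀ y ∈ Set.Ioo (0:ℝ) ystar,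
      -deriv (deriv v) y + (V y : ℂ) * v y
        = -(((1 : ℂ) - lam) ^ 2 / ((w y : ℂ)) ^ 2) * v y)
    (hI1 : IntegrableOn (fun y => ‖deriv v y‖ ^ 2) (Set.Ioo 0 ystar))
    (hI2 : IntegrableOn (fun y => |V y| * ‖v y‖ ^ 2) (Set.Ioo 0 ystar))
    (hI3 : IntegrableOn (fun y => ‖v y‖ ^ 2 / w y) (Set.Ioo 0 ystar))
    (hb0 : Filter.Tendsto (fun y => deriv v y * (starRingEnd ℂ) (v y))
      (nhdsWithin 0 (Set.Ioo 0 ystar)) (nhds 0))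
    (hb1 : Filter.Tendsto (fun y => deriv v y * (starRingEnd ℂ) (v y))
      (nhdsWithin ystar (Set.Ioo 0 ystar)) (nhds 0)) :
    (((1 : ℂ) - lam) ^ 2).im = 0 ∧ (1 < lam.re → lam.im = 0) := by
  set c : ℝ := (((1 : ℂ) - lam) ^ 2).im with hc
  have him : c = 0 := by
    by_contra hcne
    -- the key derivative computation
    have key : ∀ y ∈ Set.Ioo (0:ℝ) ystar,
        HasDerivAt (fun y => (deriv v y * (starRingEnd ℂ) (v y)).im)
          (c * (‖v y‖ ^ 2 / (w y) ^ 2)) y := by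
      intro y hy
      have hmem := isOpen_Ioo.mem_nhds hy
      have hv1 : HasDerivAt v (deriv v y) y := by
        have : DifferentiableAt ℝ v y :=
          (hv_C2.contDiffAt hmem).differentiableAt (by norm_num)
        exact this.hasDerivAt
      have hdv : ContDiffOn ℝ 1 (deriv v) (Set.Ioo 0 ystar) :=
        hv_C2.deriv_of_isOpen isOpen_Ioo (by norm_num)
      have hv2 : HasDerivAt (deriv v) (deriv (deriv v) y) y := by
        have : DifferentiableAt ℝ (deriv v) y :=
          (hdv.contDiffAt hmem).differentiableAt (by norm_num)
        exact this.hasDerivAt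
      have hcv : HasDerivAt (fun y => (starRingEnd ℂ) (v y))
          ((starRingEnd ℂ) (deriv v y)) y := hv1.star
      have hF : HasDerivAt (fun y => deriv v y * (starRingEnd ℂ) (v y))
          (deriv (deriv v) y * (starRingEnd ℂ) (v y)
            + deriv v y * (starRingEnd ℂ) (deriv v y)) y := hv2.mul hcv
      have hg : HasDerivAt (fun y => (deriv v y * (starRingEnd ℂ) (v y)).im)
          ((deriv (deriv v) y * (starRingEnd ℂ) (v y)
            + deriv v y * (starRingEnd ℂ) (deriv v y)).im) y :=
        (Complex.imCLM.hasFDerivAt.comp_hasDerivAt y hF)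
      convert hg using 1
      -- compute the imaginary part of the derivative
      have hwne : (w y : ℂ) ≠ 0 := Complex.ofReal_ne_zero.mpr (hw_pos y hy).ne'
      have hw2ne : ((w y : ℂ)) ^ 2 ≠ 0 := pow_ne_zero 2 hwne
      have hode := hODE y hy
      have hv'' : deriv (deriv v) y
          = (V y : ℂ) * v y + ((1:ℂ) - lam) ^ 2 / (w y : ℂ) ^ 2 * v y := by
        linear_combination -hode
      rw [hv'']
      have e1 : ((V y : ℂ) * v y + ((1:ℂ) - lam) ^ 2 / (w y : ℂ) ^ 2 * v y)
            * (starRingEnd ℂ) (v y)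
            + deriv v y * (starRingEnd ℂ) (deriv v y)
          = (V y : ℂ) * (v y * (starRingEnd ℂ) (v y))
            + ((1:ℂ) - lam) ^ 2 * (((w y ^ 2)⁻¹ : ℝ) : ℂ)
              * (v y * (starRingEnd ℂ) (v y))
            + deriv v y * (starRingEnd ℂ) (deriv v y) := by
        push_cast
        field_simp
      rw [e1, Complex.mul_conj, Complex.mul_conj]
      simp only [Complex.add_im, Complex.mul_im, Complex.ofReal_im, Complex.ofReal_re,
        mul_zero, zero_mul, add_zero, zero_add, Complex.normSq_eq_norm_sq]
      have hwr : w y ≠ 0 := (hw_pos y hy).ne'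
      rw [hc]
      field_simp
    have hb0im : Filter.Tendsto (fun y => (deriv v y * (starRingEnd ℂ) (v y)).im)
        (nhdsWithin 0 (Set.Ioo 0 ystar)) (nhds 0) := by
      have := (Complex.continuous_im.tendsto 0).comp hb0
      simpa [Function.comp_def] using this
    have hb1im : Filter.Tendsto (fun y => (deriv v y * (starRingEnd ℂ) (v y)).im)
        (nhdsWithin ystar (Set.Ioo 0 ystar)) (nhds 0) := by
      have := (Complex.continuous_im.tendsto 0).comp hb1
      simpa [Function.comp_def] using this
    obtain ⟨y0, hy0, hvy0⟩ := hv_ne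
    have hwy0 := hw_pos y0 hy0
    have hvnorm : 0 < ‖v y0‖ := norm_pos_iff.mpr hvy0
    rcases lt_or_gt_of_ne hcne with hneg | hpos
    · -- c < 0 : apply aux to -g
      have := aux_vanish hystar (fun y => -((deriv v y * (starRingEnd ℂ) (v y)).im))
        (fun y => (-c) * (‖v y‖ ^ 2 / (w y) ^ 2))
        (by
          intro y hy
          have h1 : (0:ℝ) ≤ ‖v y‖ ^ 2 / (w y) ^ 2 := by positivity
          have : (0:ℝ) ≤ -c := by linarith
          positivity)
        (by
          intro y hy
          have := (key y hy).neg
          exact this.congr_deriv (by ring))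
        (by simpa using hb0im.neg)
        (by simpa using hb1im.neg)
        y0 hy0
      have hfrac : 0 < ‖v y0‖ ^ 2 / (w y0) ^ 2 := by positivity
      nlinarith [this]
    · -- 0 < c
      have := aux_vanish hystar (fun y => (deriv v y * (starRingEnd ℂ) (v y)).im)
        (fun y => c * (‖v y‖ ^ 2 / (w y) ^ 2))
        (by
          intro y hy
          have h1 : (0:ℝ) ≤ ‖v y‖ ^ 2 / (w y) ^ 2 := by positivity
          positivity)
        key
        hb0im hb1im
        y0 hy0
      have hfrac : 0 < ‖v y0‖ ^ 2 / (w y0) ^ 2 := by positivity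
      nlinarith [this]
  refine ⟨him, fun hre => ?_⟩
  have h2 : (1 - lam.re) * lam.im = 0 := by
    have := him
    simp only [hc, pow_two, Complex.mul_im, Complex.sub_re, Complex.sub_im,
      Complex.one_re, Complex.one_im] at this
    nlinarith [this]
  rcases mul_eq_zero.mp h2 with h | h
  · exfalso; linarith
  · exact h
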